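/- Let μ, L₁, L_{g,1}, L_u, L_Φ be positive real numbers with μ ≤ L_{g,1}, and let α > 0 with α ≤ min{ 1/(4L_Φ), L₁/(4L_u²), μ²/(64 L₁ L_{g,1}²) }. Set b_y := 4L₁ and b_u := μ²/(8L₁). Let p, p⁺ be real numbers and a, a⁺, b, b⁺, G, D nonnegative real numbers satisfying: p⁺ ≤ p − (α/2)G² − (α/2 − L_Φα²/2)D² + L₁²α a² + L_{g,1}²α b²; (a⁺)² ≤ a²/2 + (2L_{g,1}²α²/μ²)D²; (b⁺)² ≤ b²/8 + (8L₁²/μ²)a² + (4L_u²α²/μ²)D². Then, defining V := p + b_y a² + b_u b² and V⁺ := p⁺ + b_y (a⁺)² + b_u (b⁺)², one has V⁺ − V ≤ −(α/2)G² − (α/8)D² − (b_y/8)a² − (7b_u/16)b². -/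

import Mathlib

set_option maxHeartbeats 1000000


/-- Lyapunov descent step in the proof of Theorem 3.2 of the paper, with
`b_y = 4L₁` and `b_u = μ²/(8L₁)`. -/
theorem stmt_16
    (μ L1 Lg1 Lu LΦ α : ℝ)
    (hμ : 0 < μ) (hL1 : 0 < L1) (hLg1 : 0 < Lg1) (hLu : 0 < Lu) (hLΦ : 0 < LΦ)
    (hμLg1 : μ ≤ Lg1)
    (hα : 0 < α)
    (hαle : α ≤ min (min (1 / (4 * LΦ)) (L1 / (4 * Lu ^ 2))) (μ ^ 2 / (64 * L1 * Lg1 ^ 2)))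
    (p p' : ℝ) (a a' b b' G D : ℝ)
    (ha : 0 ≤ a) (ha' : 0 ≤ a') (hb : 0 ≤ b) (hb' : 0 ≤ b') (hG : 0 ≤ G) (hD : 0 ≤ D)
    (hp : p' ≤ p - α / 2 * G ^ 2 - (α / 2 - LΦ * α ^ 2 / 2) * D ^ 2
      + L1 ^ 2 * α * a ^ 2 + Lg1 ^ 2 * α * b ^ 2)
    (haRec : a' ^ 2 ≤ a ^ 2 / 2 + 2 * Lg1 ^ 2 * α ^ 2 / μ ^ 2 * D ^ 2)
    (hbRec : b' ^ 2 ≤ b ^ 2 / 8 + 8 * L1 ^ 2 / μ ^ 2 * a ^ 2 + 4 * Lu ^ 2 * α ^ 2 / μ ^ 2 * D ^ 2) :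
    (p' + 4 * L1 * a' ^ 2 + μ ^ 2 / (8 * L1) * b' ^ 2)
      - (p + 4 * L1 * a ^ 2 + μ ^ 2 / (8 * L1) * b ^ 2)
      ≤ -(α / 2) * G ^ 2 - α / 8 * D ^ 2 - 4 * L1 / 8 * a ^ 2
        - 7 * (μ ^ 2 / (8 * L1)) / 16 * b ^ 2 := by
  have hμ2 : (0:ℝ) < μ ^ 2 := by positivity
  have h1 : α ≤ 1 / (4 * LΦ) := le_trans hαle (le_trans (min_le_left _ _) (min_le_left _ _))
  have h2 : α ≤ L1 / (4 * Lu ^ 2) := le_trans hαle (le_trans (min_le_left _ _) (min_le_right _ _))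
  have h3 : α ≤ μ ^ 2 / (64 * L1 * Lg1 ^ 2) := le_trans hαle (min_le_right _ _)
  have h1' : α * (4 * LΦ) ≤ 1 := (le_div_iff₀ (by positivity)).mp h1
  have h2' : α * (4 * Lu ^ 2) ≤ L1 := (le_div_iff₀ (by positivity)).mp h2
  have h3' : α * (64 * L1 * Lg1 ^ 2) ≤ μ ^ 2 := (le_div_iff₀ (by positivity)).mp h3
  -- coefficient bounds times D^2
  have hCD : LΦ * α ^ 2 / 2 * D ^ 2 ≤ 1 / 8 * α * D ^ 2 := by
    have : LΦ * α ^ 2 / 2 ≤ 1 / 8 * α := by nlinarith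
    exact mul_le_mul_of_nonneg_right this (sq_nonneg D)
  have hAD : 4 * L1 * (2 * Lg1 ^ 2 * α ^ 2 / μ ^ 2) * D ^ 2 ≤ 1 / 8 * α * D ^ 2 := by
    have : 4 * L1 * (2 * Lg1 ^ 2 * α ^ 2 / μ ^ 2) ≤ 1 / 8 * α := by
      rw [show 4 * L1 * (2 * Lg1 ^ 2 * α ^ 2 / μ ^ 2) = 8 * L1 * Lg1 ^ 2 * α ^ 2 / μ ^ 2 by ring,
        div_le_iff₀ hμ2]
      nlinarith [mul_le_mul_of_nonneg_left h3' hα.le]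
    exact mul_le_mul_of_nonneg_right this (sq_nonneg D)
  have hBD : μ ^ 2 / (8 * L1) * (4 * Lu ^ 2 * α ^ 2 / μ ^ 2) * D ^ 2 ≤ 1 / 8 * α * D ^ 2 := by
    have hEq : μ ^ 2 / (8 * L1) * (4 * Lu ^ 2 * α ^ 2 / μ ^ 2) = Lu ^ 2 * α ^ 2 / (2 * L1) := by
      field_simp; ring
    rw [hEq]
    have : Lu ^ 2 * α ^ 2 / (2 * L1) ≤ 1 / 8 * α := by
      rw [div_le_iff₀ (by positivity)]
      nlinarith [mul_le_mul_of_nonneg_left h2' hα.le]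
    exact mul_le_mul_of_nonneg_right this (sq_nonneg D)
  have hCa : L1 ^ 2 * α * a ^ 2 ≤ L1 / 2 * a ^ 2 := by
    have hμ2le : μ ^ 2 ≤ Lg1 ^ 2 := by nlinarith
    have h64 : α * (64 * L1) * Lg1 ^ 2 ≤ 1 * Lg1 ^ 2 := by nlinarith
    have hLg2 : (0:ℝ) < Lg1 ^ 2 := by positivity
    have h64' : α * (64 * L1) ≤ 1 := le_of_mul_le_mul_right (by linarith : α * (64 * L1) * Lg1 ^ 2 ≤ 1 * Lg1 ^ 2) hLg2
    have : L1 ^ 2 * α ≤ L1 / 2 := by nlinarith [mul_le_mul_of_nonneg_left h64' hL1.le]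
    exact mul_le_mul_of_nonneg_right this (sq_nonneg a)
  have hCb : Lg1 ^ 2 * α * b ^ 2 ≤ 7 * (μ ^ 2 / (8 * L1)) / 16 * b ^ 2 := by
    have : Lg1 ^ 2 * α ≤ 7 * (μ ^ 2 / (8 * L1)) / 16 := by
      rw [show 7 * (μ ^ 2 / (8 * L1)) / 16 = 7 * μ ^ 2 / (128 * L1) by ring]
      rw [le_div_iff₀ (by positivity)]
      nlinarith [mul_le_mul_of_nonneg_left h3' hLg1.le, sq_nonneg (μ*Lg1), mul_pos hμ hLg1]
    exact mul_le_mul_of_nonneg_right this (sq_nonneg b)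
  -- scaled recursions
  have e1 : 4 * L1 * a' ^ 2 ≤ 4 * L1 * (a ^ 2 / 2 + 2 * Lg1 ^ 2 * α ^ 2 / μ ^ 2 * D ^ 2) :=
    mul_le_mul_of_nonneg_left haRec (by positivity)
  have e2 : μ ^ 2 / (8 * L1) * b' ^ 2
      ≤ μ ^ 2 / (8 * L1) * (b ^ 2 / 8 + 8 * L1 ^ 2 / μ ^ 2 * a ^ 2
        + 4 * Lu ^ 2 * α ^ 2 / μ ^ 2 * D ^ 2) :=
    mul_le_mul_of_nonneg_left hbRec (by positivity)
  have hEq2 : μ ^ 2 / (8 * L1) * (8 * L1 ^ 2 / μ ^ 2 * a ^ 2) = L1 * a ^ 2 := by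
    field_simp
  linarith [hp, e1, e2, hCD, hAD, hBD, hCa, hCb, hEq2, sq_nonneg a, sq_nonneg b, sq_nonneg D]
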